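/- Let α ≥ 0 and β > 0 be integers and set d = 2α + β. Then the binary forms (x²+y²)^α (x+iy)^β and (x²+y²)^α (x−iy)^β are isotropic for the Bombieri–Weyl form; that is, Q_d((x²+y²)^α (x+iy)^β, (x²+y²)^α (x+iy)^β) = 0 and Q_d((x²+y²)^α (x−iy)^β, (x²+y²)^α (x−iy)^β) = 0. -/

import Mathlib

open MvPolynomial Complex

/-- The Bombieri–Weyl form on binary forms of degree `d`:
`Q_d(f,g) = ∑_{k=0}^{d} (binom(d,k))⁻¹ · (coeff of x^{d−k}y^{k} in f) · (coeff of x^{d−k}y^{k} in g)`. -/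
noncomputable def BW (d : ℕ) (f g : MvPolynomial (Fin 2) ℂ) : ℂ :=
  ∑ k ∈ Finset.range (d + 1),
    ((d.choose k : ℂ))⁻¹ *
      MvPolynomial.coeff (Finsupp.single 0 (d - k) + Finsupp.single 1 k) f *
      MvPolynomial.coeff (Finsupp.single 0 (d - k) + Finsupp.single 1 k) g

lemma coeff_pderiv (i : Fin 2) (m : Fin 2 →₀ ℕ) (p : MvPolynomial (Fin 2) ℂ) :
    coeff m (pderiv i p) = ((m i : ℂ) + 1) * coeff (m + Finsupp.single i 1) p := by
  induction p using MvPolynomial.induction_on' with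
  | add p q hp hq => simp [hp, hq, mul_add]
  | monomial s a =>
    rw [pderiv_monomial, coeff_monomial, coeff_monomial]
    by_cases hB : s = m + Finsupp.single i 1
    · have hA : s - Finsupp.single i 1 = m := by
        ext j; simp [hB, Finsupp.sub_apply]
      have hsi : s i = m i + 1 := by rw [hB]; simp
      rw [if_pos hA, if_pos hB, hsi]
      push_cast; ring
    · rw [if_neg hB]
      by_cases hA : s - Finsupp.single i 1 = m
      · have hsi : s i = 0 := by
          by_contra h0
          apply hB
          have hle : Finsupp.single i 1 ≤ s := by
            rw [Finsupp.single_le_iff]; omega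
          rw [← hA]
          exact (tsub_add_cancel_of_le hle).symm
        rw [if_pos hA, hsi]; simp
      · rw [if_neg hA]; ring


lemma BW_X0_step (d : ℕ) (f g : MvPolynomial (Fin 2) ℂ) :
    BW (d + 1) (X 0 * f) g = ((d : ℂ) + 1)⁻¹ * BW d f (pderiv 0 g) := by
  unfold BW
  rw [Finset.sum_range_succ, Finset.mul_sum]
  have htop : MvPolynomial.coeff
      (Finsupp.single 0 (d + 1 - (d + 1)) + Finsupp.single (1 : Fin 2) (d + 1)) (X 0 * f) = 0 := by
    rw [Nat.sub_self, Finsupp.single_zero, zero_add, coeff_X_mul']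
    simp
  rw [htop]
  simp only [mul_zero, zero_mul, add_zero]
  apply Finset.sum_congr rfl
  intro k hk
  rw [Finset.mem_range] at hk
  have hk' : k ≤ d := Nat.lt_succ_iff.mp hk
  -- index rewriting
  have hidx : Finsupp.single (0 : Fin 2) (d + 1 - k) + Finsupp.single (1 : Fin 2) k
      = Finsupp.single (0 : Fin 2) 1 + (Finsupp.single (0 : Fin 2) (d - k) + Finsupp.single (1 : Fin 2) k) := by
    have : d + 1 - k = 1 + (d - k) := by omega
    rw [this, Finsupp.single_add, add_assoc]
  have hidx2 : (Finsupp.single (0 : Fin 2) (d - k) + Finsupp.single (1 : Fin 2) k)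
      + Finsupp.single (0 : Fin 2) 1
      = Finsupp.single (0 : Fin 2) 1 + (Finsupp.single (0 : Fin 2) (d - k) + Finsupp.single (1 : Fin 2) k) :=
    add_comm _ _
  rw [hidx, coeff_X_mul, coeff_pderiv, hidx2]
  have happ : ((Finsupp.single (0 : Fin 2) (d - k) + Finsupp.single (1 : Fin 2) k) 0 : ℂ)
      = (d : ℂ) - k := by
    simp [Nat.cast_sub hk']
  rw [happ]
  -- numeric identity
  have hnat : (d + 1) * d.choose k = (d + 1 - k) * (d + 1).choose k := by
    have h1 : (d + 1) * d.choose (d - k) = (d + 1).choose (d - k + 1) * (d - k + 1) :=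
      Nat.add_one_mul_choose_eq d (d - k)
    have h2 : d.choose (d - k) = d.choose k := Nat.choose_symm hk'
    have h3 : (d + 1).choose (d - k + 1) = (d + 1).choose k := by
      have : d - k + 1 = d + 1 - k := by omega
      rw [this, Nat.choose_symm (by omega)]
    rw [h2] at h1
    rw [h1, h3]
    have : d + 1 - k = d - k + 1 := by omega
    rw [this]; ring
  have hA : ((d + 1).choose k : ℂ) ≠ 0 := by
    exact_mod_cast (Nat.choose_pos (by omega : k ≤ d + 1)).ne'
  have hB : (d.choose k : ℂ) ≠ 0 := by
    exact_mod_cast (Nat.choose_pos hk').ne'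
  have hd1 : ((d : ℂ) + 1) ≠ 0 := Nat.cast_add_one_ne_zero d
  have hnatC : ((d : ℂ) + 1) * (d.choose k : ℂ) = ((d + 1 - k : ℕ) : ℂ) * ((d + 1).choose k : ℂ) := by
    exact_mod_cast congrArg (Nat.cast : ℕ → ℂ) hnat
  have hdk : ((d + 1 - k : ℕ) : ℂ) = ((d - k : ℕ) : ℂ) + 1 := by
    have : d + 1 - k = (d - k) + 1 := by omega
    rw [this]; push_cast; ring
  rw [hdk, Nat.cast_sub hk'] at hnatC
  have key : ∀ F G : ℂ, (((d + 1).choose k : ℂ))⁻¹ * F * G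
      = ((d : ℂ) + 1)⁻¹ * ((d.choose k : ℂ)⁻¹ * F * (((d : ℂ) - (k : ℂ) + 1) * G)) := by
    intro F G
    field_simp
    linear_combination (F * G) * hnatC
  exact key _ _

lemma BW_X1_step (d : ℕ) (f g : MvPolynomial (Fin 2) ℂ) :
    BW (d + 1) (X 1 * f) g = ((d : ℂ) + 1)⁻¹ * BW d f (pderiv 1 g) := by
  unfold BW
  rw [Finset.sum_range_succ', Finset.mul_sum]
  have hbot : MvPolynomial.coeff
      (Finsupp.single 0 (d + 1 - 0) + Finsupp.single (1 : Fin 2) 0) (X 1 * f) = 0 := by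
    rw [Finsupp.single_zero, add_zero, coeff_X_mul']
    simp
  rw [hbot]
  simp only [mul_zero, zero_mul, add_zero]
  apply Finset.sum_congr rfl
  intro k hk
  rw [Finset.mem_range] at hk
  have hk' : k ≤ d := Nat.lt_succ_iff.mp hk
  have hd1k : d + 1 - (k + 1) = d - k := by omega
  rw [hd1k]
  have hidx : Finsupp.single (0 : Fin 2) (d - k) + Finsupp.single (1 : Fin 2) (k + 1)
      = Finsupp.single (1 : Fin 2) 1 + (Finsupp.single (0 : Fin 2) (d - k) + Finsupp.single (1 : Fin 2) k) := by
    rw [Finsupp.single_add]; abel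
  have hidx2 : (Finsupp.single (0 : Fin 2) (d - k) + Finsupp.single (1 : Fin 2) k)
      + Finsupp.single (1 : Fin 2) 1
      = Finsupp.single (1 : Fin 2) 1 + (Finsupp.single (0 : Fin 2) (d - k) + Finsupp.single (1 : Fin 2) k) :=
    add_comm _ _
  rw [hidx, coeff_X_mul, coeff_pderiv, hidx2]
  have happ : ((Finsupp.single (0 : Fin 2) (d - k) + Finsupp.single (1 : Fin 2) k) 1 : ℂ) = (k : ℂ) := by
    simp
  rw [happ]
  have hnat : (d + 1) * d.choose k = (d + 1).choose (k + 1) * (k + 1) := Nat.add_one_mul_choose_eq d k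
  have hnatC : ((d : ℂ) + 1) * (d.choose k : ℂ) = ((d + 1).choose (k + 1) : ℂ) * ((k : ℂ) + 1) := by
    exact_mod_cast congrArg (Nat.cast : ℕ → ℂ) hnat
  have hA : (((d + 1).choose (k + 1) : ℕ) : ℂ) ≠ 0 := by
    exact_mod_cast (Nat.choose_pos (by omega : k + 1 ≤ d + 1)).ne'
  have hB : (d.choose k : ℂ) ≠ 0 := by
    exact_mod_cast (Nat.choose_pos hk').ne'
  have hd1 : ((d : ℂ) + 1) ≠ 0 := Nat.cast_add_one_ne_zero d
  have key : ∀ F G : ℂ, (((d + 1).choose (k + 1) : ℕ) : ℂ)⁻¹ * F * G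
      = ((d : ℂ) + 1)⁻¹ * ((d.choose k : ℂ)⁻¹ * F * (((k : ℂ) + 1) * G)) := by
    intro F G
    field_simp
    linear_combination (F * G) * hnatC
  exact key _ _

lemma BW_add_left (d : ℕ) (f₁ f₂ g : MvPolynomial (Fin 2) ℂ) :
    BW d (f₁ + f₂) g = BW d f₁ g + BW d f₂ g := by
  unfold BW
  rw [← Finset.sum_add_distrib]
  apply Finset.sum_congr rfl
  intro k _
  rw [coeff_add]; ring

lemma BW_C_mul_left (a : ℂ) (d : ℕ) (f g : MvPolynomial (Fin 2) ℂ) :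
    BW d (C a * f) g = a * BW d f g := by
  unfold BW
  rw [Finset.mul_sum]
  apply Finset.sum_congr rfl
  intro k _
  rw [coeff_C_mul]; ring

lemma BW_add_right (d : ℕ) (f g₁ g₂ : MvPolynomial (Fin 2) ℂ) :
    BW d f (g₁ + g₂) = BW d f g₁ + BW d f g₂ := by
  unfold BW
  rw [← Finset.sum_add_distrib]
  apply Finset.sum_congr rfl
  intro k _
  rw [coeff_add]; ring

lemma BW_C_mul_right (a : ℂ) (d : ℕ) (f g : MvPolynomial (Fin 2) ℂ) :
    BW d f (C a * g) = a * BW d f g := by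
  unfold BW
  rw [Finset.mul_sum]
  apply Finset.sum_congr rfl
  intro k _
  rw [coeff_C_mul]; ring

lemma BW_zero_right (d : ℕ) (f : MvPolynomial (Fin 2) ℂ) : BW d f 0 = 0 := by
  simp [BW]

/-- The derivation `∂ₓ + c ∂ᵧ`. -/
noncomputable def Eop (c : ℂ) (g : MvPolynomial (Fin 2) ℂ) : MvPolynomial (Fin 2) ℂ :=
  pderiv 0 g + C c * pderiv 1 g

lemma BW_u_step (c : ℂ) (d : ℕ) (f g : MvPolynomial (Fin 2) ℂ) :
    BW (d + 1) ((X 0 + C c * X 1) * f) g = ((d : ℂ) + 1)⁻¹ * BW d f (Eop c g) := by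
  have h : (X 0 + C c * X 1) * f = X 0 * f + C c * (X 1 * f) := by ring
  rw [h, BW_add_left, BW_C_mul_left, BW_X0_step, BW_X1_step, Eop, BW_add_right, BW_C_mul_right]
  ring

lemma Eop_mul (c : ℂ) (f g : MvPolynomial (Fin 2) ℂ) :
    Eop c (f * g) = Eop c f * g + f * Eop c g := by
  unfold Eop
  rw [pderiv_mul, pderiv_mul]
  ring

lemma Eop_zero (c : ℂ) : Eop c 0 = 0 := by simp [Eop]

lemma Eop_C_mul (c a : ℂ) (g : MvPolynomial (Fin 2) ℂ) :
    Eop c (C a * g) = C a * Eop c g := by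
  unfold Eop
  rw [pderiv_C_mul, pderiv_C_mul]
  ring

lemma Eop_iter_zero (c : ℂ) (j : ℕ) : (Eop c)^[j] 0 = 0 := by
  induction j with
  | zero => rfl
  | succ j ih => rw [Function.iterate_succ_apply, Eop_zero, ih]

lemma Eop_iter_C_mul (c a : ℂ) (j : ℕ) (g : MvPolynomial (Fin 2) ℂ) :
    (Eop c)^[j] (C a * g) = C a * (Eop c)^[j] g := by
  induction j generalizing g with
  | zero => rfl
  | succ j ih => rw [Function.iterate_succ_apply, Function.iterate_succ_apply, Eop_C_mul, ih]

lemma Eop_u (c : ℂ) (hc : c * c = -1) : Eop c (X 0 + C c * X 1) = 0 := by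
  unfold Eop
  simp [pderiv_X_self, pderiv_X_of_ne (show (0 : Fin 2) ≠ 1 by decide),
    pderiv_X_of_ne (show (1 : Fin 2) ≠ 0 by decide), ← C_mul, hc]

lemma Eop_v (c : ℂ) (hc : c * c = -1) : Eop c (X 0 - C c * X 1) = 2 := by
  unfold Eop
  have h0 : pderiv (0 : Fin 2) (X 0 - C c * X 1 : MvPolynomial (Fin 2) ℂ) = 1 := by
    simp [pderiv_X_self, pderiv_X_of_ne (show (1 : Fin 2) ≠ 0 by decide)]
  have h1 : pderiv (1 : Fin 2) (X 0 - C c * X 1 : MvPolynomial (Fin 2) ℂ) = -C c := by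
    simp [pderiv_X_self, pderiv_X_of_ne (show (0 : Fin 2) ≠ 1 by decide)]
  rw [h0, h1]
  have h2 : (C c : MvPolynomial (Fin 2) ℂ) * -C c = 1 := by
    rw [mul_neg, ← C_mul, hc]
    simp
  rw [h2]
  norm_num

lemma Eop_u_pow (c : ℂ) (hc : c * c = -1) (a : ℕ) : Eop c ((X 0 + C c * X 1) ^ a) = 0 := by
  induction a with
  | zero => simp [Eop]
  | succ a ih =>
    rw [pow_succ, Eop_mul, ih, Eop_u c hc]
    ring

lemma Eop_kill (c : ℂ) (hc : c * c = -1) :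
    ∀ (b j a : ℕ), (Eop c)^[b + (j + 1)] ((X 0 + C c * X 1) ^ a * (X 0 - C c * X 1) ^ b) = 0 := by
  intro b
  induction b with
  | zero =>
    intro j a
    rw [zero_add, Function.iterate_succ_apply, pow_zero, mul_one, Eop_u_pow c hc, Eop_iter_zero]
  | succ b ih =>
    intro j a
    have hstep : Eop c ((X 0 + C c * X 1) ^ a * (X 0 - C c * X 1) ^ (b + 1))
        = C (2 * ((b : ℂ) + 1)) * ((X 0 + C c * X 1) ^ a * (X 0 - C c * X 1) ^ b) := by
      rw [Eop_mul, Eop_u_pow c hc, zero_mul, zero_add]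
      have hpow : Eop c ((X 0 - C c * X 1) ^ (b + 1))
          = C (2 * ((b : ℂ) + 1)) * (X 0 - C c * X 1) ^ b := by
        unfold Eop
        rw [pderiv_pow, pderiv_pow]
        have h0 : pderiv (0 : Fin 2) (X 0 - C c * X 1 : MvPolynomial (Fin 2) ℂ) = 1 := by
          simp [pderiv_X_self, pderiv_X_of_ne (show (1 : Fin 2) ≠ 0 by decide)]
        have h1 : pderiv (1 : Fin 2) (X 0 - C c * X 1 : MvPolynomial (Fin 2) ℂ) = -C c := by
          simp [pderiv_X_self, pderiv_X_of_ne (show (0 : Fin 2) ≠ 1 by decide)]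
        rw [h0, h1]
        have hcast : ((b + 1 : ℕ) : MvPolynomial (Fin 2) ℂ) = C ((b : ℂ) + 1) := by
          push_cast; simp [map_add, map_natCast]
        have hcc : (C c : MvPolynomial (Fin 2) ℂ) * -C c = 1 := by
          rw [mul_neg, ← C_mul, hc]; simp
        rw [Nat.add_sub_cancel, hcast]
        rw [show (2 : ℂ) * ((b : ℂ) + 1) = ((b : ℂ) + 1) * 2 by ring, C_mul]
        rw [show (C 2 : MvPolynomial (Fin 2) ℂ) = 2 from map_ofNat C 2]
        linear_combination (C ((b : ℂ) + 1) * (X 0 - C c * X 1) ^ b : MvPolynomial (Fin 2) ℂ) * hcc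
      rw [hpow]
      ring
    have harr : b + 1 + (j + 1) = (b + (j + 1)) + 1 := by omega
    rw [harr, Function.iterate_succ_apply, hstep, Eop_iter_C_mul, ih j a, mul_zero]

lemma BW_peel (c : ℂ) :
    ∀ (m d : ℕ) (f g : MvPolynomial (Fin 2) ℂ), (Eop c)^[m] g = 0 →
      BW (d + m) ((X 0 + C c * X 1) ^ m * f) g = 0 := by
  intro m
  induction m with
  | zero =>
    intro d f g hg
    rw [Function.iterate_zero_apply] at hg
    rw [hg, BW_zero_right]
  | succ m ih =>
    intro d f g hg
    have h1 : (X 0 + C c * X 1) ^ (m + 1) * f = (X 0 + C c * X 1) * ((X 0 + C c * X 1) ^ m * f) := by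
      ring
    have h2 : d + (m + 1) = (d + m) + 1 := by omega
    rw [h1, h2, BW_u_step]
    rw [ih d f (Eop c g) (by rw [← Function.iterate_succ_apply]; exact hg)]
    ring

lemma main_part (c : ℂ) (hc : c * c = -1) (α β : ℕ) (hβ : 0 < β) :
    BW (2 * α + β) (((X 0) ^ 2 + (X 1) ^ 2) ^ α * (X 0 + C c * X 1) ^ β)
                   (((X 0) ^ 2 + (X 1) ^ 2) ^ α * (X 0 + C c * X 1) ^ β) = 0 := by
  have hcc : (C c : MvPolynomial (Fin 2) ℂ) * C c = -1 := by
    rw [← C_mul, hc]; simp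
  have huv : ((X 0) ^ 2 + (X 1) ^ 2 : MvPolynomial (Fin 2) ℂ)
      = (X 0 + C c * X 1) * (X 0 - C c * X 1) := by
    linear_combination (X 1 : MvPolynomial (Fin 2) ℂ) ^ 2 * hcc
  have hform : (((X 0) ^ 2 + (X 1) ^ 2) ^ α * (X 0 + C c * X 1) ^ β : MvPolynomial (Fin 2) ℂ)
      = (X 0 + C c * X 1) ^ (α + β) * (X 0 - C c * X 1) ^ α := by
    rw [huv, mul_pow, pow_add]; ring
  obtain ⟨j, hj⟩ : ∃ j, β = j + 1 := ⟨β - 1, by omega⟩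
  have hkill : (Eop c)^[α + β]
      ((X 0 + C c * X 1) ^ (α + β) * (X 0 - C c * X 1) ^ α) = 0 := by
    rw [hj]
    exact Eop_kill c hc α j (α + (j + 1))
  have hd : 2 * α + β = α + (α + β) := by omega
  rw [hd, hform]
  exact BW_peel c (α + β) α _ _ hkill


/-- For `α ≥ 0`, `β > 0` and `d = 2α + β`, the forms `(x²+y²)^α (x+iy)^β` and
`(x²+y²)^α (x−iy)^β` are isotropic for the Bombieri–Weyl form. -/
theorem stmt_6 (α β : ℕ) (hβ : 0 < β) :
    BW (2 * α + β) (((X 0) ^ 2 + (X 1) ^ 2) ^ α * (X 0 + C I * X 1) ^ β)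
                   (((X 0) ^ 2 + (X 1) ^ 2) ^ α * (X 0 + C I * X 1) ^ β) = 0 ∧
    BW (2 * α + β) (((X 0) ^ 2 + (X 1) ^ 2) ^ α * (X 0 - C I * X 1) ^ β)
                   (((X 0) ^ 2 + (X 1) ^ 2) ^ α * (X 0 - C I * X 1) ^ β) = 0 := by
  constructor
  · exact main_part I Complex.I_mul_I α β hβ
  · have h := main_part (-I) (by rw [neg_mul_neg, Complex.I_mul_I]) α β hβ
    rw [show (X 0 + C (-I) * X 1 : MvPolynomial (Fin 2) ℂ) = X 0 - C I * X 1 by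
      rw [map_neg]; ring] at h
    exact h
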